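/- Let M be a von Neumann algebra on a finite-dimensional complex Hilbert space H and let ρ be a density matrix on H. Then there exists a unique density matrix ρ_M belonging to M such that Tr(O ρ_M) = Tr(O ρ) for every O ∈ M. -/

import Mathlib

open Matrix Polynomial
open scoped ComplexOrder

/-- A von Neumann algebra on a finite-dimensional complex Hilbert space. -/
structure IsVNAlgebra {ι : Type*} [Fintype ι] [DecidableEq ι]
    (M : Set (Matrix ι ι ℂ)) : Prop where
  add_mem : ∀ A ∈ M, ∀ B ∈ M, A + B ∈ M
  mul_mem : ∀ A ∈ M, ∀ B ∈ M, A * B ∈ M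
  smul_mem : ∀ (c : ℂ), ∀ A ∈ M, c • A ∈ M
  star_mem : ∀ A ∈ M, Aᴴ ∈ M
  one_mem : (1 : Matrix ι ι ℂ) ∈ M

section VNAux
set_option linter.unusedSectionVars false

variable {ι : Type*} [Fintype ι] [DecidableEq ι]

private lemma trace_star_mul_self_eq_zero {A : Matrix ι ι ℂ} (h : (Aᴴ * A).trace = 0) :
    A = 0 := by
  have h1 : (Aᴴ * A).trace = ((∑ i, ∑ j, Complex.normSq (A j i) : ℝ) : ℂ) := by
    simp only [Matrix.trace, Matrix.diag, Matrix.mul_apply, Matrix.conjTranspose_apply]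
    push_cast
    refine Finset.sum_congr rfl fun i _ => Finset.sum_congr rfl fun j _ => ?_
    rw [Complex.normSq_eq_conj_mul_self]; rfl
  rw [h] at h1
  have h2 : ∑ i, ∑ j, Complex.normSq (A j i) = 0 := by exact_mod_cast h1.symm
  ext j i
  have hin := (Finset.sum_eq_zero_iff_of_nonneg (fun i _ =>
    Finset.sum_nonneg fun j _ => Complex.normSq_nonneg _)).mp h2 i (Finset.mem_univ i)
  have := (Finset.sum_eq_zero_iff_of_nonneg (fun j _ =>
    Complex.normSq_nonneg _)).mp hin j (Finset.mem_univ j)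
  simpa using Complex.normSq_eq_zero.mp this

private lemma trace_nonneg_of_posSemidef {A : Matrix ι ι ℂ} (hA : A.PosSemidef) :
    0 ≤ A.trace := by
  refine Finset.sum_nonneg fun i _ => ?_
  simpa using hA.diag_nonneg (i := i)

example (x : ℝ) : (RCLike.ofReal x : ℂ) = (x : ℂ) := rfl

private noncomputable def conjAlgHom (U : Matrix.unitaryGroup ι ℂ) :
    Matrix ι ι ℂ →ₐ[ℂ] Matrix ι ι ℂ where
  toFun X := (U : Matrix ι ι ℂ) * X * star (U : Matrix ι ι ℂ)
  map_one' := by show (U : Matrix ι ι ℂ) * 1 * star (U : Matrix ι ι ℂ) = 1; rw [mul_one]; exact Matrix.mem_unitaryGroup_iff.mp U.2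
  map_mul' X Y := by
    have h : star (U : Matrix ι ι ℂ) * (U : Matrix ι ι ℂ) = 1 :=
      Matrix.mem_unitaryGroup_iff'.mp U.2
    calc (U : Matrix ι ι ℂ) * (X * Y) * star (U : Matrix ι ι ℂ)
        = (U : Matrix ι ι ℂ) * X * ((star (U : Matrix ι ι ℂ) * (U : Matrix ι ι ℂ)) *
            (Y * star (U : Matrix ι ι ℂ))) := by rw [h, one_mul]; simp only [mul_assoc]
      _ = _ := by simp only [mul_assoc]
  map_zero' := by simp
  map_add' X Y := by simp [add_mul, mul_add]
  commutes' r := by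
    simp only [Algebra.algebraMap_eq_smul_one, smul_mul_assoc, mul_smul_comm, one_mul, mul_one]
    rw [Matrix.mem_unitaryGroup_iff.mp U.2]

private lemma vn_aeval_conj (U : Matrix.unitaryGroup ι ℂ) (D : Matrix ι ι ℂ) (p : ℂ[X]) :
    aeval ((U : Matrix ι ι ℂ) * D * star (U : Matrix ι ι ℂ)) p
      = (U : Matrix ι ι ℂ) * aeval D p * star (U : Matrix ι ι ℂ) :=
  Polynomial.aeval_algHom_apply (conjAlgHom U) D p

private lemma vn_aeval_diagonal (d : ι → ℂ) (p : ℂ[X]) :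
    aeval (Matrix.diagonal d) p = Matrix.diagonal (fun i => p.eval (d i)) := by
  have h1 : Matrix.diagonal d = Matrix.diagonalAlgHom ℂ d := rfl
  rw [h1, Polynomial.aeval_algHom_apply]
  have h2 : aeval d p = fun i => p.eval (d i) := by
    funext i
    have := Polynomial.aeval_algHom_apply (Pi.evalAlgHom ℂ (fun _ : ι => ℂ) i) d p
    simpa [Polynomial.coe_aeval_eq_eval] using this.symm
  rw [h2]; rfl

private lemma vn_aeval_mem {M : Set (Matrix ι ι ℂ)} (hM : IsVNAlgebra M) {A : Matrix ι ι ℂ}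
    (hA : A ∈ M) (p : ℂ[X]) : aeval A p ∈ M := by
  induction p using Polynomial.induction_on with
  | C a =>
      rw [Polynomial.aeval_C, Algebra.algebraMap_eq_smul_one]
      exact hM.smul_mem a 1 hM.one_mem
  | add p q hp hq => rw [map_add]; exact hM.add_mem _ hp _ hq
  | monomial n a h =>
      rw [pow_succ, ← mul_assoc, _root_.map_mul, Polynomial.aeval_X]
      exact hM.mul_mem _ h _ hA


end VNAux

/-- for a von Neumann algebra `M` on a finite-dimensional complex Hilbert
space and a density matrix `ρ` (positive semidefinite, trace one), there exists a unique
density matrix `ρ_M ∈ M` (the algebraic state) with `Tr(O ρ_M) = Tr(O ρ)` for all `O ∈ M`. -/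
theorem exists_unique_algebraic_state {ι : Type*} [Fintype ι] [DecidableEq ι]
    (M : Set (Matrix ι ι ℂ)) (hM : IsVNAlgebra M)
    (ρ : Matrix ι ι ℂ) (hρ : ρ.PosSemidef) (hρtr : ρ.trace = 1) :
    ∃! σ : Matrix ι ι ℂ,
      σ ∈ M ∧ σ.PosSemidef ∧ σ.trace = 1 ∧
        ∀ O ∈ M, (O * σ).trace = (O * ρ).trace := by
  classical
  -- `M` as a submodule
  let S : Submodule ℂ (Matrix ι ι ℂ) :=
    { carrier := M
      add_mem' := fun {a b} ha hb => hM.add_mem a ha b hb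
      zero_mem' := by simpa using hM.smul_mem 0 1 hM.one_mem
      smul_mem' := fun c a ha => hM.smul_mem c a ha }
  have hSM : ∀ {A : Matrix ι ι ℂ}, A ∈ S ↔ A ∈ M := Iff.rfl
  -- key cancellation lemma
  have key : ∀ τ : Matrix ι ι ℂ, τ ∈ M → (∀ O ∈ M, (O * τ).trace = 0) → τ = 0 := by
    intro τ hτ h
    exact trace_star_mul_self_eq_zero (h τᴴ (hM.star_mem τ hτ))
  -- the duality map
  let L : S →ₗ[ℂ] Module.Dual ℂ S :=
    { toFun := fun A =>
        { toFun := fun O => ((O : Matrix ι ι ℂ) * (A : Matrix ι ι ℂ)).trace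
          map_add' := by intro x y; simp [add_mul]
          map_smul' := by intro c x; simp [smul_mul_assoc] }
      map_add' := by intro x y; ext O; simp [mul_add]
      map_smul' := by intro c x; ext O; simp [mul_smul_comm] }
  have hLinj : Function.Injective L := by
    rw [← LinearMap.ker_eq_bot, LinearMap.ker_eq_bot']
    intro A hA
    have hA0 : (A : Matrix ι ι ℂ) = 0 :=
      key A A.2 (fun O hO => LinearMap.congr_fun hA ⟨O, hO⟩)
    exact Subtype.ext hA0
  have hLsurj : Function.Surjective L :=
    (LinearMap.injective_iff_surjective_of_finrank_eq_finrank
      (Subspace.dual_finrank_eq).symm).mp hLinj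
  obtain ⟨σ₀, hσ₀⟩ := hLsurj
    { toFun := fun O => ((O : Matrix ι ι ℂ) * ρ).trace
      map_add' := by intro x y; simp [add_mul]
      map_smul' := by intro c x; simp [smul_mul_assoc] }
  set σ := (σ₀ : Matrix ι ι ℂ) with hσdef
  have hσM : σ ∈ M := σ₀.2
  have hmatch : ∀ O ∈ M, (O * σ).trace = (O * ρ).trace := fun O hO =>
    LinearMap.congr_fun hσ₀ ⟨O, hO⟩
  -- uniqueness of trace-matching elements of M
  have huniq : ∀ τ₁ ∈ M, ∀ τ₂ ∈ M,
      (∀ O ∈ M, (O * τ₁).trace = (O * τ₂).trace) → τ₁ = τ₂ := by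
    intro τ₁ h1 τ₂ h2 h
    have hmem : τ₁ - τ₂ ∈ M := by
      have := hM.add_mem τ₁ h1 _ (hM.smul_mem (-1) τ₂ h2)
      simpa [sub_eq_add_neg] using this
    have h0 : τ₁ - τ₂ = 0 := by
      refine key _ hmem fun O hO => ?_
      rw [mul_sub, Matrix.trace_sub, h O hO, sub_self]
    exact sub_eq_zero.mp h0
  -- σ is Hermitian
  have hherm : σ.IsHermitian := by
    refine huniq σᴴ (hM.star_mem σ hσM) σ hσM fun O hO => ?_
    have h1 : (O * σᴴ).trace = star ((Oᴴ * σ).trace) := by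
      rw [← Matrix.trace_conjTranspose, Matrix.conjTranspose_mul,
        Matrix.conjTranspose_conjTranspose, Matrix.trace_mul_comm]
    rw [h1, hmatch Oᴴ (hM.star_mem O hO), ← Matrix.trace_conjTranspose,
      Matrix.conjTranspose_mul, Matrix.conjTranspose_conjTranspose, hρ.1,
      Matrix.trace_mul_comm, hmatch O hO]
  -- σ has trace one
  have hσtr : σ.trace = 1 := by
    have := hmatch 1 hM.one_mem
    simpa [hρtr] using this
  -- σ is positive semidefinite
  have hpsd : σ.PosSemidef := by
    rw [hherm.posSemidef_iff_eigenvalues_nonneg]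
    intro j
    by_contra hneg
    push_neg at hneg
    set ev : ι → ℝ := hherm.eigenvalues with hev
    set U := hherm.eigenvectorUnitary with hU
    have hspec := hherm.spectral_theorem; rw [Unitary.conjStarAlgAut_apply] at hspec
    rw [← hev, ← hU] at hspec
    have hUU : (U : Matrix ι ι ℂ) * star (U : Matrix ι ι ℂ) = 1 :=
      Matrix.mem_unitaryGroup_iff.mp U.2
    have hUstar : star (U : Matrix ι ι ℂ) * (U : Matrix ι ι ℂ) = 1 :=
      Matrix.mem_unitaryGroup_iff'.mp U.2
    have hmul : ∀ D₁ D₂ : Matrix ι ι ℂ,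
        ((U : Matrix ι ι ℂ) * D₁ * star (U : Matrix ι ι ℂ)) *
          ((U : Matrix ι ι ℂ) * D₂ * star (U : Matrix ι ι ℂ))
          = (U : Matrix ι ι ℂ) * (D₁ * D₂) * star (U : Matrix ι ι ℂ) := by
      intro D₁ D₂
      have hcanc : ∀ X : Matrix ι ι ℂ,
          star (U : Matrix ι ι ℂ) * ((U : Matrix ι ι ℂ) * X) = X := by
        intro X; rw [← mul_assoc, hUstar, one_mul]
      simp only [mul_assoc, hcanc]
    have htrconj : ∀ D : Matrix ι ι ℂ,
        ((U : Matrix ι ι ℂ) * D * star (U : Matrix ι ι ℂ)).trace = D.trace := by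
      intro D
      rw [Matrix.trace_mul_cycle, hUstar, one_mul]
    -- the interpolation polynomial
    set s : Finset ℂ := Finset.univ.image (fun i => (ev i : ℂ)) with hs
    set r : ℂ → ℂ := fun x => if x = (ev j : ℂ) then 1 else 0 with hr
    set p := Lagrange.interpolate s id r with hp
    have heval : ∀ i, p.eval ((ev i : ℂ)) = r ((ev i : ℂ)) := fun i =>
      Lagrange.eval_interpolate_at_node r Function.injective_id.injOn
        (Finset.mem_image_of_mem _ (Finset.mem_univ i))
    set w : ι → ℂ := fun i => if ev i = ev j then 1 else 0 with hw
    have hweval : (fun i => p.eval ((RCLike.ofReal ∘ ev) i)) = w := by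
      funext i
      have : ((ev i : ℂ) = (ev j : ℂ)) ↔ ev i = ev j := Complex.ofReal_inj
      simp only [Function.comp_apply]
      rw [show ((RCLike.ofReal (ev i) : ℂ)) = ((ev i : ℂ)) from rfl, heval i, hr, hw]
      simp only [this]
    set P : Matrix ι ι ℂ :=
      (U : Matrix ι ι ℂ) * Matrix.diagonal w * star (U : Matrix ι ι ℂ) with hPdef
    have hPM : P ∈ M := by
      have h1 : aeval σ p ∈ M := vn_aeval_mem hM hσM p
      have h2 : aeval σ p = P := by
        conv_lhs => rw [hspec]
        rw [vn_aeval_conj, vn_aeval_diagonal, hweval]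
      rwa [h2] at h1
    have hwstar : star w = w := by
      funext i; rw [hw]; simp only [Pi.star_apply]; split_ifs <;> simp
    have hPherm : Pᴴ = P := by
      rw [hPdef]
      simp only [Matrix.conjTranspose_mul, Matrix.conjTranspose_nonsing_inv,
        Matrix.diagonal_conjTranspose, hwstar, Matrix.star_eq_conjTranspose]
      rw [← Matrix.star_eq_conjTranspose, ← Matrix.star_eq_conjTranspose, star_star, mul_assoc]
    have hww : (fun i => w i * w i) = w := by
      funext i; rw [hw]; simp only []; split_ifs <;> simp
    have hPP : P * P = P := by
      rw [hPdef, hmul, Matrix.diagonal_mul_diagonal, hww]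
    -- trace of P * σ is a negative real number
    have htrPσ : (P * σ).trace = ((∑ i, if ev i = ev j then ev i else 0 : ℝ) : ℂ) := by
      have h1 : (P * σ).trace = (Matrix.diagonal w * Matrix.diagonal
          (RCLike.ofReal ∘ ev) : Matrix ι ι ℂ).trace := by
        conv_lhs => rw [hspec, hPdef, hmul]
        exact htrconj _
      rw [h1, Matrix.diagonal_mul_diagonal, Matrix.trace_diagonal]
      push_cast
      refine Finset.sum_congr rfl fun i _ => ?_
      by_cases h : ev i = ev j <;> simp [hw, h]
    have hrealneg : (∑ i, if ev i = ev j then ev i else 0 : ℝ) < 0 := by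
      have hle : ∀ i ∈ Finset.univ, (if ev i = ev j then ev i else 0) ≤ (0 : ℝ) := by
        intro i _
        split_ifs with h
        · rw [h]; exact hneg.le
        · exact le_rfl
      have hlt : ∃ i ∈ Finset.univ, (if ev i = ev j then ev i else 0) < (0 : ℝ) :=
        ⟨j, Finset.mem_univ j, by simpa using hneg⟩
      have h := Finset.sum_lt_sum hle hlt
      simpa using h
    -- but trace of P * σ is nonnegative
    have hge : (0 : ℂ) ≤ (P * σ).trace := by
      have h1 : (P * σ).trace = (P * ρ).trace := hmatch P hPM
      have h2 : (P * ρ * Pᴴ).trace = (P * ρ).trace := by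
        rw [Matrix.trace_mul_cycle, hPherm, hPP]
      rw [h1, ← h2]
      exact trace_nonneg_of_posSemidef (hρ.mul_mul_conjTranspose_same P)
    rw [htrPσ] at hge
    have h0 : (0 : ℝ) ≤ (∑ i, if ev i = ev j then ev i else 0 : ℝ) :=
      Complex.zero_le_real.mp hge
    linarith
  refine ⟨σ, ⟨hσM, hpsd, hσtr, hmatch⟩, ?_⟩
  rintro τ ⟨hτM, -, -, hτmatch⟩
  exact huniq τ hτM σ hσM fun O hO => by rw [hτmatch O hO, hmatch O hO]
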